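/- Assume that at t ∈ I both hypotheses H1+ and H1− hold (for all sufficiently small ε > 0 each of the equations p(t,h) = t + ε and p(t,h) = t − ε has a solution h = h(t,ε) with h(t,ε) → 0 as ε → 0⁺), that p(t,h) and the partial derivative p_h(t,h) are continuous in h in a neighborhood of h = 0, that p_h(t,0) ≠ 0, and that lim_{ε→0} ε/h(t,ε) exists and is nonzero. If f is p-differentiable at t, then f is differentiable at t in the classical sense. -/

import Mathlib

open Filter Topology Set

/-- Assume `H1⁺` and `H1⁻` hold at `t` (with solution functions
`hsolp ε`, `hsolm ε` tending to `0` as `ε → 0⁺`), that `h ↦ p t h` is continuous at `h = 0`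
and differentiable in `h` near `h = 0` with partial derivative `ph h = p_h(t,h)` continuous
at `h = 0`, that `ph 0 = p_h(t,0) ≠ 0`, and that `lim_{ε→0⁺} ε / h(t,ε)` exists and is
nonzero (for each of the solution functions). If `f` is `p`-differentiable at `t` (i.e.
`D_p f (t) = L` exists as a finite limit), then `f` is differentiable at `t` in the
classical sense. -/
theorem p_differentiable_implies_differentiable
    (p : ℝ → ℝ → ℝ) (f : ℝ → ℝ) (t L Kp Km : ℝ) (ph : ℝ → ℝ) (hsolp hsolm : ℝ → ℝ)
    (hH1p : ∀ᶠ ε in 𝓝[>] (0 : ℝ), p t (hsolp ε) = t + ε)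
    (hsolp0 : Tendsto hsolp (𝓝[>] (0 : ℝ)) (𝓝 0))
    (hH1m : ∀ᶠ ε in 𝓝[>] (0 : ℝ), p t (hsolm ε) = t - ε)
    (hsolm0 : Tendsto hsolm (𝓝[>] (0 : ℝ)) (𝓝 0))
    (hpcont : ContinuousAt (fun h => p t h) 0)
    (hph : ∀ᶠ h in 𝓝 (0 : ℝ), HasDerivAt (fun k => p t k) (ph h) h)
    (hphcont : ContinuousAt ph 0)
    (hph0 : ph 0 ≠ 0)
    (hratiop : Tendsto (fun ε => ε / hsolp ε) (𝓝[>] (0 : ℝ)) (𝓝 Kp)) (hKp : Kp ≠ 0)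
    (hratiom : Tendsto (fun ε => ε / hsolm ε) (𝓝[>] (0 : ℝ)) (𝓝 Km)) (hKm : Km ≠ 0)
    (hf : Tendsto (fun h => (f (p t h) - f t) / h) (𝓝[≠] (0 : ℝ)) (𝓝 L)) :
    DifferentiableAt ℝ f t := by
  -- `p t 0 = t`
  have hpt0 : p t 0 = t := by
    have h1 : Tendsto (fun ε => p t (hsolp ε)) (𝓝[>] (0 : ℝ)) (𝓝 (p t 0)) :=
      hpcont.tendsto.comp hsolp0
    have h2 : Tendsto (fun ε : ℝ => t + ε) (𝓝[>] (0 : ℝ)) (𝓝 t) := by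
      have h2' : Tendsto (fun ε : ℝ => t + ε) (𝓝 (0 : ℝ)) (𝓝 (t + 0)) :=
        tendsto_const_nhds.add tendsto_id
      simpa using h2'.mono_left nhdsWithin_le_nhds
    exact tendsto_nhds_unique (h1.congr' hH1p) h2
  -- eventual nonvanishing of the solution functions
  have hnep : ∀ᶠ ε in 𝓝[>] (0 : ℝ), hsolp ε ≠ 0 := by
    filter_upwards [hH1p, self_mem_nhdsWithin] with ε hε hεpos h0
    rw [h0, hpt0] at hε
    have : ε = 0 := by linarith
    exact absurd this (ne_of_gt hεpos)
  have hnem : ∀ᶠ ε in 𝓝[>] (0 : ℝ), hsolm ε ≠ 0 := by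
    filter_upwards [hH1m, self_mem_nhdsWithin] with ε hε hεpos h0
    rw [h0, hpt0] at hε
    have : ε = 0 := by linarith
    exact absurd this (ne_of_gt hεpos)
  have hsolp0' : Tendsto hsolp (𝓝[>] (0 : ℝ)) (𝓝[≠] (0 : ℝ)) := by
    rw [tendsto_nhdsWithin_iff]
    exact ⟨hsolp0, hnep⟩
  have hsolm0' : Tendsto hsolm (𝓝[>] (0 : ℝ)) (𝓝[≠] (0 : ℝ)) := by
    rw [tendsto_nhdsWithin_iff]
    exact ⟨hsolm0, hnem⟩
  -- slope of `p t` at 0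
  have hd0 : HasDerivAt (fun k => p t k) (ph 0) 0 := hph.self_of_nhds
  have hslope : Tendsto (slope (fun k => p t k) 0) (𝓝[≠] (0 : ℝ)) (𝓝 (ph 0)) :=
    hasDerivAt_iff_tendsto_slope.mp hd0
  -- `Kp = ph 0`
  have hKpph : Kp = ph 0 := by
    have h1 : Tendsto (fun ε => slope (fun k => p t k) 0 (hsolp ε)) (𝓝[>] (0 : ℝ))
        (𝓝 (ph 0)) := hslope.comp hsolp0'
    have h2 : Tendsto (fun ε => ε / hsolp ε) (𝓝[>] (0 : ℝ)) (𝓝 (ph 0)) := by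
      apply h1.congr'
      filter_upwards [hH1p] with ε hε
      rw [slope_def_field, hε, hpt0]
      ring_nf
    exact tendsto_nhds_unique hratiop h2
  -- `Km = -ph 0`
  have hKmph : Km = -ph 0 := by
    have h1 : Tendsto (fun ε => slope (fun k => p t k) 0 (hsolm ε)) (𝓝[>] (0 : ℝ))
        (𝓝 (ph 0)) := hslope.comp hsolm0'
    have h2 : Tendsto (fun ε => -(ε / hsolm ε)) (𝓝[>] (0 : ℝ)) (𝓝 (ph 0)) := by
      apply h1.congr'
      filter_upwards [hH1m] with ε hε
      rw [slope_def_field, hε, hpt0]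
      ring_nf
    have h3 := h2.neg
    simp only [neg_neg] at h3
    have := tendsto_nhds_unique hratiom h3
    linarith
  -- right limit of difference quotient
  have hright : Tendsto (fun ε => (f (t + ε) - f t) / ε) (𝓝[>] (0 : ℝ)) (𝓝 (L / ph 0)) := by
    have h1 : Tendsto (fun ε => (f (p t (hsolp ε)) - f t) / hsolp ε) (𝓝[>] (0 : ℝ))
        (𝓝 L) := hf.comp hsolp0'
    have h2 : Tendsto (fun ε => hsolp ε / ε) (𝓝[>] (0 : ℝ)) (𝓝 Kp⁻¹) := by
      have := hratiop.inv₀ hKp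
      simpa only [inv_div] using this
    have h3 := h1.mul h2
    have h4 : L * Kp⁻¹ = L / ph 0 := by rw [hKpph]; field_simp
    rw [h4] at h3
    apply h3.congr'
    filter_upwards [hH1p, hnep, self_mem_nhdsWithin] with ε hε hne hεpos
    rw [hε]
    field_simp
  -- left limit of difference quotient
  have hleft : Tendsto (fun ε => (f (t - ε) - f t) / (-ε)) (𝓝[>] (0 : ℝ)) (𝓝 (L / ph 0)) := by
    have h1 : Tendsto (fun ε => (f (p t (hsolm ε)) - f t) / hsolm ε) (𝓝[>] (0 : ℝ))
        (𝓝 L) := hf.comp hsolm0'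
    have h2 : Tendsto (fun ε => hsolm ε / ε) (𝓝[>] (0 : ℝ)) (𝓝 Km⁻¹) := by
      have := hratiom.inv₀ hKm
      simpa only [inv_div] using this
    have h3 := (h1.mul h2).neg
    have h4 : -(L * Km⁻¹) = L / ph 0 := by
      rw [hKmph]
      field_simp
    rw [h4] at h3
    apply h3.congr'
    filter_upwards [hH1m, hnem, self_mem_nhdsWithin] with ε hε hne hεpos
    have hε0 : ε ≠ 0 := ne_of_gt (Set.mem_Ioi.mp hεpos)
    rw [hε, div_neg]
    rw [show (f (t - ε) - f t) / hsolm ε * (hsolm ε / ε) = (f (t - ε) - f t) / ε by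
      field_simp]
  -- assemble into slope limit at t
  have hsub1 : Tendsto (fun s : ℝ => s - t) (𝓝[>] t) (𝓝[>] (0 : ℝ)) := by
    rw [tendsto_nhdsWithin_iff]
    constructor
    · have h' : Tendsto (fun s : ℝ => s - t) (𝓝 t) (𝓝 (t - t)) :=
        tendsto_id.sub tendsto_const_nhds
      simpa using h'.mono_left nhdsWithin_le_nhds
    · filter_upwards [self_mem_nhdsWithin] with s hs
      simpa [Set.mem_Ioi, sub_pos] using hs
  have hsub2 : Tendsto (fun s : ℝ => t - s) (𝓝[<] t) (𝓝[>] (0 : ℝ)) := by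
    rw [tendsto_nhdsWithin_iff]
    constructor
    · have h' : Tendsto (fun s : ℝ => t - s) (𝓝 t) (𝓝 (t - t)) :=
        tendsto_const_nhds.sub tendsto_id
      simpa using h'.mono_left nhdsWithin_le_nhds
    · filter_upwards [self_mem_nhdsWithin] with s hs
      simpa [Set.mem_Ioi, sub_pos] using hs
  have hR : Tendsto (slope f t) (𝓝[>] t) (𝓝 (L / ph 0)) := by
    have := hright.comp hsub1
    apply this.congr
    intro s
    simp only [Function.comp_apply, slope_def_field]
    rw [show t + (s - t) = s by ring]
  have hL : Tendsto (slope f t) (𝓝[<] t) (𝓝 (L / ph 0)) := by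
    have := hleft.comp hsub2
    apply this.congr
    intro s
    simp only [Function.comp_apply, slope_def_field]
    rw [show t - (t - s) = s by ring, show -(t - s) = s - t by ring]
  have hslopef : Tendsto (slope f t) (𝓝[≠] t) (𝓝 (L / ph 0)) := by
    rw [← nhdsLT_sup_nhdsGT, tendsto_sup]
    exact ⟨hL, hR⟩
  exact (hasDerivAt_iff_tendsto_slope.mpr hslopef).differentiableAt
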